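/- Assume Turing Determinacy and suppose f : 2^ℕ → 2^ℕ is such that for all x, y in some cone (i.e., all x, y Turing above some fixed z), x ≡_T y implies f(x) = f(y). Then f is literally constant on a cone: there exist w ∈ 2^ℕ and c ∈ 2^ℕ such that f(x) = c for all x ≥_T w. -/

import Mathlib

/-! Oracle computability preliminaries: codes for oracle partial recursive
functions, a standard numbering `φ`, Turing reducibility, and related notions. -/

namespace MC

/-- Codes for oracle partial recursive functions. -/
inductive OCode : Type
  | zero : OCode
  | succ : OCode
  | left : OCode
  | right : OCode
  | oracle : OCode
  | pair : OCode → OCode → OCode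
  | comp : OCode → OCode → OCode
  | prec : OCode → OCode → OCode
  | rfind' : OCode → OCode

/-- Evaluation of an oracle code with oracle `o : ℕ → ℕ`. -/
def evalo (o : ℕ → ℕ) : OCode → ℕ →. ℕ
  | OCode.zero => pure 0
  | OCode.succ => fun n => Part.some (n + 1)
  | OCode.left => fun n => Part.some (Nat.unpair n).1
  | OCode.right => fun n => Part.some (Nat.unpair n).2
  | OCode.oracle => fun n => Part.some (o n)
  | OCode.pair cf cg => fun n => Nat.pair <$> evalo o cf n <*> evalo o cg n
  | OCode.comp cf cg => fun n => evalo o cg n >>= evalo o cf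
  | OCode.prec cf cg =>
    Nat.unpaired fun a n =>
      n.rec (evalo o cf a) fun y IH => do
        let i ← IH
        evalo o cg (Nat.pair a (Nat.pair y i))
  | OCode.rfind' cf =>
    Nat.unpaired fun a m =>
      (Nat.rfind fun n => (fun m => m = 0) <$> evalo o cf (Nat.pair a (n + m))).map (· + m)

/-- A standard numbering of oracle codes. -/
def ofNatOCode : ℕ → OCode
  | 0 => OCode.zero
  | 1 => OCode.succ
  | 2 => OCode.left
  | 3 => OCode.right
  | 4 => OCode.oracle
  | n + 5 =>
    let m := n.div2.div2
    have hm : m < n + 5 := by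
      simp only [m, Nat.div2_val]
      exact
        lt_of_le_of_lt (le_trans (Nat.div_le_self _ _) (Nat.div_le_self _ _))
          (Nat.lt_succ_of_le (Nat.le_add_right _ _))
    have _m1 : m.unpair.1 < n + 5 := lt_of_le_of_lt m.unpair_left_le hm
    have _m2 : m.unpair.2 < n + 5 := lt_of_le_of_lt m.unpair_right_le hm
    match n.bodd, n.div2.bodd with
    | false, false => OCode.pair (ofNatOCode m.unpair.1) (ofNatOCode m.unpair.2)
    | false, true  => OCode.comp (ofNatOCode m.unpair.1) (ofNatOCode m.unpair.2)
    | true , false => OCode.prec (ofNatOCode m.unpair.1) (ofNatOCode m.unpair.2)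
    | true , true  => OCode.rfind' (ofNatOCode m)
decreasing_by
  all_goals first
    | exact Nat.le_of_lt_succ _m1
    | exact Nat.le_of_lt_succ _m2
    | exact Nat.le_of_lt_succ hm
    | exact _m1
    | exact _m2
    | exact hm

/-- `φ e x` is the `e`-th partial function computable with oracle `x ∈ 2^ℕ`. -/
def φ (e : ℕ) (x : ℕ → Bool) : ℕ →. ℕ :=
  evalo (fun n => cond (x n) 1 0) (ofNatOCode e)

/-- `odot e x` ("`e ⊙_T x`") is `φ e x` when the latter is total with values in `{0,1}`
(read as an element of Cantor space), and undefined otherwise. -/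
def odot (e : ℕ) (x : ℕ → Bool) : Part (ℕ → Bool) :=
  ⟨(∀ n, (φ e x n).Dom) ∧ ∀ n, ∀ m ∈ φ e x n, m ≤ 1,
   fun h n => decide ((φ e x n).get (h.1 n) = 1)⟩

/-- Turing reducibility: `x = φ_e^y` for some `e`. -/
def TRed (x y : ℕ → Bool) : Prop := ∃ e, x ∈ odot e y

/-- Turing equivalence. -/
def TEquiv (x y : ℕ → Bool) : Prop := TRed x y ∧ TRed y x

open scoped Classical in
/-- `sdot (i,j) x` ("`(i,j) ˢ⊙_T x`") is `φ_i^x` if `φ_i^x ∈ 2^ℕ` and `φ_j^{φ_i^x} = x`,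
and undefined otherwise. -/
noncomputable def sdot (p : ℕ × ℕ) (x : ℕ → Bool) : Part (ℕ → Bool) :=
  (odot p.1 x).bind fun y => if x ∈ odot p.2 y then Part.some y else Part.none

/-- The join of a sequence: `(⨁ₙ xₙ)(⟨i,j⟩) = x_j(i)`. -/
def joinSeq (f : ℕ → ℕ → Bool) : ℕ → Bool :=
  fun k => f (Nat.unpair k).2 (Nat.unpair k).1

/-- The join of two elements of Cantor space. -/
def join2 (a b : ℕ → Bool) : ℕ → Bool :=
  fun n => if n % 2 = 0 then a (n / 2) else b ((n - 1) / 2)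

/-- Prepending a bit to an element of Cantor space. -/
def consBit (b : Bool) (x : ℕ → Bool) : ℕ → Bool :=
  fun n => match n with
  | 0 => b
  | n + 1 => x n

open scoped Classical in
/-- The Turing jump: `x′(n) = 1` iff `n ∈ dom(φ_n^x)`. -/
noncomputable def jump (x : ℕ → Bool) : ℕ → Bool :=
  fun n => decide (φ n x n).Dom

/-- The constant-zero element of Cantor space. -/
def zeros : ℕ → Bool := fun _ => false

end MC

/-- Turing Determinacy: every `≡_T`-invariant set contains a cone or is disjoint from a cone. -/
def TD : Prop :=
  ∀ A : Set (ℕ → Bool), (∀ x y, x ∈ A → MC.TEquiv x y → y ∈ A) →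
    (∃ z, ∀ x, MC.TRed z x → x ∈ A) ∨ ∃ z, ∀ x, MC.TRed z x → x ∉ A


namespace MC

/-- Numbering of oracle codes, inverse to `ofNatOCode`. -/
def encodeOCode : OCode → ℕ
  | .zero => 0
  | .succ => 1
  | .left => 2
  | .right => 3
  | .oracle => 4
  | .pair cf cg => 2 * (2 * Nat.pair (encodeOCode cf) (encodeOCode cg)) + 5
  | .comp cf cg => 2 * (2 * Nat.pair (encodeOCode cf) (encodeOCode cg) + 1) + 5
  | .prec cf cg => 2 * (2 * Nat.pair (encodeOCode cf) (encodeOCode cg)) + 1 + 5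
  | .rfind' cf => 2 * (2 * encodeOCode cf + 1) + 1 + 5

theorem ofNatOCode_succ5 (n : ℕ) : ofNatOCode (n+5) =
    match n.bodd, n.div2.bodd with
    | false, false => OCode.pair (ofNatOCode n.div2.div2.unpair.1) (ofNatOCode n.div2.div2.unpair.2)
    | false, true  => OCode.comp (ofNatOCode n.div2.div2.unpair.1) (ofNatOCode n.div2.div2.unpair.2)
    | true , false => OCode.prec (ofNatOCode n.div2.div2.unpair.1) (ofNatOCode n.div2.div2.unpair.2)
    | true , true  => OCode.rfind' (ofNatOCode n.div2.div2) := by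
  rw [ofNatOCode]

theorem bodd_even (m : ℕ) : Nat.bodd (2*m) = false := by simp [Nat.bodd_mul]
theorem bodd_odd (m : ℕ) : Nat.bodd (2*m+1) = true := by simp [Nat.bodd_add, Nat.bodd_mul]

theorem ofNatOCode_encode : ∀ c, ofNatOCode (encodeOCode c) = c := by
  intro c
  induction c with
  | zero => simp [encodeOCode, ofNatOCode]
  | succ => simp [encodeOCode, ofNatOCode]
  | left => simp [encodeOCode, ofNatOCode]
  | right => simp [encodeOCode, ofNatOCode]
  | oracle => simp [encodeOCode, ofNatOCode]
  | pair cf cg ihf ihg =>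
    simp only [encodeOCode]
    rw [ofNatOCode_succ5]
    have h1 : Nat.bodd (2 * (2 * Nat.pair (encodeOCode cf) (encodeOCode cg))) = false :=
      bodd_even _
    have h2 : Nat.div2 (2 * (2 * Nat.pair (encodeOCode cf) (encodeOCode cg)))
        = 2 * Nat.pair (encodeOCode cf) (encodeOCode cg) := by
      simp [Nat.div2_val]
    have h3 : Nat.bodd (2 * Nat.pair (encodeOCode cf) (encodeOCode cg)) = false := bodd_even _
    have h4 : Nat.div2 (2 * Nat.pair (encodeOCode cf) (encodeOCode cg))
        = Nat.pair (encodeOCode cf) (encodeOCode cg) := by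
      simp [Nat.div2_val]
    rw [h1, h2, h3, h4]
    simp [Nat.unpair_pair, ihf, ihg]
  | comp cf cg ihf ihg =>
    simp only [encodeOCode]
    rw [ofNatOCode_succ5]
    have h1 : Nat.bodd (2 * (2 * Nat.pair (encodeOCode cf) (encodeOCode cg) + 1)) = false :=
      bodd_even _
    have h2 : Nat.div2 (2 * (2 * Nat.pair (encodeOCode cf) (encodeOCode cg) + 1))
        = 2 * Nat.pair (encodeOCode cf) (encodeOCode cg) + 1 := by
      simp [Nat.div2_val]
    have h3 : Nat.bodd (2 * Nat.pair (encodeOCode cf) (encodeOCode cg) + 1) = true := bodd_odd _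
    have h4 : Nat.div2 (2 * Nat.pair (encodeOCode cf) (encodeOCode cg) + 1)
        = Nat.pair (encodeOCode cf) (encodeOCode cg) := by
      simp [Nat.div2_val]
    rw [h1, h2, h3, h4]
    simp [Nat.unpair_pair, ihf, ihg]
  | prec cf cg ihf ihg =>
    simp only [encodeOCode]
    rw [ofNatOCode_succ5]
    have h1 : Nat.bodd (2 * (2 * Nat.pair (encodeOCode cf) (encodeOCode cg)) + 1) = true :=
      bodd_odd _
    have h2 : Nat.div2 (2 * (2 * Nat.pair (encodeOCode cf) (encodeOCode cg)) + 1)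
        = 2 * Nat.pair (encodeOCode cf) (encodeOCode cg) := by
      simp [Nat.div2_val]
    have h3 : Nat.bodd (2 * Nat.pair (encodeOCode cf) (encodeOCode cg)) = false := bodd_even _
    have h4 : Nat.div2 (2 * Nat.pair (encodeOCode cf) (encodeOCode cg))
        = Nat.pair (encodeOCode cf) (encodeOCode cg) := by
      simp [Nat.div2_val]
    rw [h1, h2, h3, h4]
    simp [Nat.unpair_pair, ihf, ihg]
  | rfind' cf ihf =>
    simp only [encodeOCode]
    rw [ofNatOCode_succ5]
    have h1 : Nat.bodd (2 * (2 * encodeOCode cf + 1) + 1) = true := bodd_odd _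
    have h2 : Nat.div2 (2 * (2 * encodeOCode cf + 1) + 1) = 2 * encodeOCode cf + 1 := by
      simp [Nat.div2_val]
    have h3 : Nat.bodd (2 * encodeOCode cf + 1) = true := bodd_odd _
    have h4 : Nat.div2 (2 * encodeOCode cf + 1) = encodeOCode cf := by
      simp [Nat.div2_val]
    rw [h1, h2, h3, h4]
    simp [ihf]

/-- Substitution of a code `d` for the oracle throughout a code. -/
def subst (d : OCode) : OCode → OCode
  | .zero => .zero
  | .succ => .succ
  | .left => .left
  | .right => .right
  | .oracle => d
  | .pair cf cg => .pair (subst d cf) (subst d cg)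
  | .comp cf cg => .comp (subst d cf) (subst d cg)
  | .prec cf cg => .prec (subst d cf) (subst d cg)
  | .rfind' cf => .rfind' (subst d cf)

theorem evalo_subst {o o' : ℕ → ℕ} {d : OCode} (hd : ∀ n, evalo o d n = Part.some (o' n)) :
    ∀ c n, evalo o (subst d c) n = evalo o' c n := by
  intro c
  induction c with
  | zero => intro n; rfl
  | succ => intro n; rfl
  | left => intro n; rfl
  | right => intro n; rfl
  | oracle => intro n; exact hd n
  | pair cf cg ihf ihg => intro n; simp only [subst, evalo]; rw [funext ihf, funext ihg]
  | comp cf cg ihf ihg => intro n; simp only [subst, evalo]; rw [funext ihf, funext ihg]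
  | prec cf cg ihf ihg => intro n; simp only [subst, evalo]; rw [funext ihf, funext ihg]
  | rfind' cf ihf => intro n; simp only [subst, evalo]; rw [funext ihf]

/-- The characteristic-function values computed by a code witnessing `y ∈ odot d z`. -/
theorem odot_phi_eq {d : ℕ} {y z : ℕ → Bool} (h : y ∈ odot d z) :
    ∀ n, φ d z n = Part.some (cond (y n) 1 0) := by
  intro n
  rcases h with ⟨⟨hdom, hle⟩, hy⟩
  have hd := hdom n
  have hmem := Part.get_mem hd
  have hm : (φ d z n).get hd ≤ 1 := hle n _ hmem
  have hyn : y n = decide ((φ d z n).get hd = 1) := congrFun hy.symm n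
  have hco : cond (y n) 1 0 = (φ d z n).get hd := by
    rw [hyn]
    have : (φ d z n).get hd = 0 ∨ (φ d z n).get hd = 1 := by omega
    rcases this with h0 | h0 <;> simp [h0]
  rw [hco]
  exact (Part.some_get hd).symm

theorem odot_ext {e e' : ℕ} {x y z : ℕ → Bool} (h : ∀ n, φ e y n = φ e' z n)
    (hx : x ∈ odot e y) : x ∈ odot e' z := by
  rcases hx with ⟨⟨hdom, hle⟩, hx⟩
  have hdom' : ∀ n, (φ e' z n).Dom := fun n => (h n) ▸ hdom n
  refine ⟨⟨hdom', fun n m hm => hle n m ((h n) ▸ hm)⟩, ?_⟩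
  funext n
  show decide ((φ e' z n).get (hdom' n) = 1) = x n
  have hmem : (φ e y n).get (hdom n) ∈ φ e' z n := (h n) ▸ Part.get_mem (hdom n)
  rw [Part.get_eq_of_mem hmem (hdom' n)]
  exact congrFun hx n

theorem TRed.trans {x y z : ℕ → Bool} (hxy : TRed x y) (hyz : TRed y z) : TRed x z := by
  rcases hxy with ⟨e, he⟩
  rcases hyz with ⟨d, hd⟩
  refine ⟨encodeOCode (subst (ofNatOCode d) (ofNatOCode e)), odot_ext (fun n => ?_) he⟩
  have hdz : ∀ n, evalo (fun n => cond (z n) 1 0) (ofNatOCode d) n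
      = Part.some (cond (y n) 1 0) := odot_phi_eq hd
  have hs := evalo_subst hdz (ofNatOCode e) n
  simp only [φ, ofNatOCode_encode]
  exact hs.symm

/-- A column of a join is reducible to the join. -/
theorem tred_joinSeq (g : ℕ → ℕ → Bool) (k : ℕ) : TRed (g k) (joinSeq g) := by
  classical
  let cconst : ℕ → OCode := fun m => Nat.rec OCode.zero (fun _ c => OCode.comp OCode.succ c) m
  have hconst : ∀ m n o, evalo o (cconst m) n = Part.some m := by
    intro m n o
    induction m with
    | zero => rfl
    | succ m ih =>
      show (evalo o (cconst m) n).bind _ = _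
      rw [ih]
      simp [evalo]
  let c : OCode := OCode.comp OCode.oracle (OCode.pair (OCode.pair OCode.left OCode.right) (cconst k))
  have hc : ∀ i, evalo (fun n => cond (joinSeq g n) 1 0) c i
      = Part.some (cond (g k i) 1 0) := by
    intro i
    show ((Nat.pair <$> _ <*> _ : Part ℕ).bind _ : Part ℕ) = _
    rw [hconst]
    simp [evalo, Seq.seq, joinSeq, Nat.unpair_pair]
  have hφ : ∀ i, φ (encodeOCode c) (joinSeq g) i = Part.some (cond (g k i) 1 0) := by
    intro i
    simp only [φ, ofNatOCode_encode]
    exact hc i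
  have hdom : ∀ i, (φ (encodeOCode c) (joinSeq g) i).Dom := by
    intro i; rw [hφ]; trivial
  refine ⟨encodeOCode c, ⟨⟨hdom, ?_⟩, ?_⟩⟩
  · intro n m hm
    rw [hφ, Part.mem_some_iff] at hm
    subst hm
    cases g k n <;> simp
  · funext n
    show decide ((φ (encodeOCode c) (joinSeq g) n).get (hdom n) = 1) = g k n
    have hmem : cond (g k n) 1 0 ∈ φ (encodeOCode c) (joinSeq g) n := by
      rw [hφ]; exact Part.mem_some _
    rw [Part.get_eq_of_mem hmem (hdom n)]
    cases g k n <;> simp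

end MC

/-- under TD, a function constant on `≡_T`-classes on a cone is literally
constant on a cone. -/
theorem constant_on_cone (td : TD) (f : (ℕ → Bool) → (ℕ → Bool)) (z : ℕ → Bool)
    (hf : ∀ x y, MC.TRed z x → MC.TRed z y → MC.TEquiv x y → f x = f y) :
    ∃ w c, ∀ x, MC.TRed w x → f x = c := by
  classical
  have key : ∀ n : ℕ, ∃ w b, ∀ x, MC.TRed w x → MC.TRed z x → f x n = b := by
    intro n
    set A : Set (ℕ → Bool) := {x | MC.TRed z x → f x n = true} with hA
    have inv : ∀ x y, x ∈ A → MC.TEquiv x y → y ∈ A := by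
      intro x y hx hxy hzy
      have hzx : MC.TRed z x := MC.TRed.trans hzy hxy.2
      have := hf x y hzx hzy hxy
      rw [← this]
      exact hx hzx
    rcases td A inv with ⟨w, hw⟩ | ⟨w, hw⟩
    · exact ⟨w, true, fun x hwx hzx => hw x hwx hzx⟩
    · refine ⟨w, false, fun x hwx hzx => ?_⟩
      have := hw x hwx
      simp only [hA, Set.mem_setOf_eq, not_forall] at this
      rcases this with ⟨_, hne⟩
      simpa using hne
  choose g b hgb using key
  set g' : ℕ → ℕ → Bool := fun k => Nat.rec z (fun m _ => g m) k with hg'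
  refine ⟨MC.joinSeq g', b, fun x hx => ?_⟩
  have hzx : MC.TRed z x := MC.TRed.trans (MC.tred_joinSeq g' 0) hx
  funext n
  exact hgb n x (MC.TRed.trans (MC.tred_joinSeq g' (n+1)) hx) hzx
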